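/- Let δ, p, q, α be real numbers with 0<δ<1, 2≤p<q and q<α+1, and let c_a>0, c_b>0 be real constants. Then there exists λ₀>0 such that for every λ with 0<λ<λ₀ there exist no reals s>0, X>0, Y≥0 satisfying all of: X+Y ≥ min(s^p, s^q); (α+1−p)·X + (α+1−q)·Y ≤ (α+δ)·c_a·s^{1−δ}; and (p+δ−1)·X + (q+δ−1)·Y ≤ λ·(α+δ)·c_b·s^{α+1}. -/

import Mathlib

/-- the arithmetic core of the emptiness of the degenerate
Nehari set `M_λ⁰` for small `λ`: there is `λ₀ > 0` such that for every
`0 < λ < λ₀` no `s > 0`, `X > 0`, `Y ≥ 0` satisfy simultaneously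
`X+Y ≥ min(s^p, s^q)`,
`(α+1−p)X+(α+1−q)Y ≤ (α+δ)c_a s^{1−δ}` and
`(p+δ−1)X+(q+δ−1)Y ≤ λ(α+δ)c_b s^{α+1}`. -/
theorem statement12
    (δ p q α ca cb : ℝ)
    (hδ0 : 0 < δ) (hδ1 : δ < 1)
    (hp : 2 ≤ p) (hpq : p < q) (hq : q < α + 1)
    (hca : 0 < ca) (hcb : 0 < cb) :
    ∃ lam₀ : ℝ, 0 < lam₀ ∧
      ∀ lam : ℝ, 0 < lam → lam < lam₀ →
        ¬ ∃ s X Y : ℝ, 0 < s ∧ 0 < X ∧ 0 ≤ Y ∧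
          min (s ^ p) (s ^ q) ≤ X + Y ∧
          (α + 1 - p) * X + (α + 1 - q) * Y ≤ (α + δ) * ca * s ^ (1 - δ) ∧
          (p + δ - 1) * X + (q + δ - 1) * Y
            ≤ lam * (α + δ) * cb * s ^ (α + 1) := by
  have hα0 : 0 < α + δ := by linarith
  have hq1 : 0 < α + 1 - q := by linarith
  have hpd : 0 < p + δ - 1 := by linarith
  set C1 : ℝ := (α + δ) * ca / (α + 1 - q) with hC1
  set C2 : ℝ := (α + δ) * cb / (p + δ - 1) with hC2
  have hC1pos : 0 < C1 := by positivity
  have hC2pos : 0 < C2 := by positivity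
  set e : ℝ := p - 1 + δ with he
  have hepos : 0 < e := by rw [he]; linarith
  set S : ℝ := C1 ^ e⁻¹ with hS
  set M : ℝ := max S 1 with hM
  have hM1 : (1:ℝ) ≤ M := le_max_right _ _
  have hMpos : 0 < M := lt_of_lt_of_le one_pos hM1
  have hMe : (1:ℝ) ≤ M ^ (α + 1 - p) :=
    Real.one_le_rpow hM1 (by linarith)
  have hMepos : 0 < M ^ (α + 1 - p) := by positivity
  refine ⟨(C2 * M ^ (α + 1 - p))⁻¹, by positivity, ?_⟩
  intro lam hl0 hl1
  rintro ⟨s, X, Y, hs, hX, hY, hmin, h2, h3⟩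
  have hb : 0 < C2 * M ^ (α + 1 - p) := by positivity
  have hlam1 : lam * (C2 * M ^ (α + 1 - p)) < 1 := by
    calc lam * (C2 * M ^ (α + 1 - p))
        < (C2 * M ^ (α + 1 - p))⁻¹ * (C2 * M ^ (α + 1 - p)) :=
          mul_lt_mul_of_pos_right hl1 hb
      _ = 1 := inv_mul_cancel₀ hb.ne'
  -- From h3: X + Y ≤ λ C2 s^{α+1}
  have hB : X + Y ≤ lam * C2 * s ^ (α + 1) := by
    have h1 : (p + δ - 1) * (X + Y) ≤ lam * ((α + δ) * cb) * s ^ (α + 1) := by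
      nlinarith
    have h2' : X + Y ≤ (lam * ((α + δ) * cb) * s ^ (α + 1)) / (p + δ - 1) :=
      (le_div_iff₀' hpd).2 h1
    calc X + Y ≤ (lam * ((α + δ) * cb) * s ^ (α + 1)) / (p + δ - 1) := h2'
      _ = lam * C2 * s ^ (α + 1) := by rw [hC2]; ring
  -- From h2: X + Y ≤ C1 s^{1-δ}
  have hA : X + Y ≤ C1 * s ^ (1 - δ) := by
    have h1 : (α + 1 - q) * (X + Y) ≤ (α + δ) * ca * s ^ (1 - δ) := by
      nlinarith
    have h2' : X + Y ≤ ((α + δ) * ca * s ^ (1 - δ)) / (α + 1 - q) :=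
      (le_div_iff₀' hq1).2 h1
    calc X + Y ≤ ((α + δ) * ca * s ^ (1 - δ)) / (α + 1 - q) := h2'
      _ = C1 * s ^ (1 - δ) := by rw [hC1]; ring
  rcases le_or_gt 1 s with h1s | h1s
  · -- s ≥ 1 : min = s^p
    have hpmin : s ^ p ≤ s ^ q := Real.rpow_le_rpow_of_exponent_le h1s hpq.le
    have hmin' : s ^ p ≤ X + Y := by rwa [min_eq_left hpmin] at hmin
    -- s^p ≤ C1 s^{1-δ} ⇒ s^e ≤ C1 ⇒ s ≤ S ≤ M
    have h6 : 0 < s ^ (1 - δ) := Real.rpow_pos_of_pos hs _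
    have hse : s ^ e ≤ C1 := by
      have h4 : s ^ p ≤ C1 * s ^ (1 - δ) := le_trans hmin' hA
      rw [← mul_le_mul_iff_left₀ h6]
      have h5 : s ^ e * s ^ (1 - δ) = s ^ p := by
        rw [← Real.rpow_add hs, he]; ring_nf
      rw [h5]; exact h4
    have hsM : s ≤ M := by
      have h0 : (s ^ e) ^ e⁻¹ ≤ C1 ^ e⁻¹ :=
        Real.rpow_le_rpow (Real.rpow_nonneg hs.le _) hse (by positivity)
      have hss : (s ^ e) ^ e⁻¹ = s := by
        rw [← Real.rpow_mul hs.le, mul_inv_cancel₀ hepos.ne', Real.rpow_one]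
      exact le_trans (by rw [← hss]; exact h0) (le_max_left _ _)
    -- s^p ≤ λ C2 s^{α+1} ⇒ 1 ≤ λ C2 s^{α+1-p}
    have h7 : s ^ p ≤ lam * C2 * s ^ (α + 1) := le_trans hmin' hB
    have hsp : 0 < s ^ p := Real.rpow_pos_of_pos hs _
    have h8 : (1:ℝ) ≤ lam * C2 * s ^ (α + 1 - p) := by
      rw [← mul_le_mul_iff_left₀ hsp, one_mul]
      have h9 : lam * C2 * s ^ (α + 1 - p) * s ^ p = lam * C2 * s ^ (α + 1) := by
        rw [mul_assoc, ← Real.rpow_add hs]; ring_nf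
      rw [h9]; exact h7
    have h10 : s ^ (α + 1 - p) ≤ M ^ (α + 1 - p) :=
      Real.rpow_le_rpow hs.le hsM (by linarith)
    have hlc : 0 < lam * C2 := by positivity
    have h11 : (1:ℝ) ≤ lam * (C2 * M ^ (α + 1 - p)) := by
      calc (1:ℝ) ≤ lam * C2 * s ^ (α + 1 - p) := h8
        _ ≤ lam * C2 * M ^ (α + 1 - p) :=
            mul_le_mul_of_nonneg_left h10 hlc.le
        _ = lam * (C2 * M ^ (α + 1 - p)) := by ring
    linarith
  · -- s < 1 : min = s^q
    have hqmin : s ^ q ≤ s ^ p :=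
      Real.rpow_le_rpow_of_exponent_ge hs h1s.le hpq.le
    have hmin' : s ^ q ≤ X + Y := by rwa [min_eq_right hqmin] at hmin
    have h7 : s ^ q ≤ lam * C2 * s ^ (α + 1) := le_trans hmin' hB
    have hsq : 0 < s ^ q := Real.rpow_pos_of_pos hs _
    have h8 : (1:ℝ) ≤ lam * C2 * s ^ (α + 1 - q) := by
      rw [← mul_le_mul_iff_left₀ hsq, one_mul]
      have h9 : lam * C2 * s ^ (α + 1 - q) * s ^ q = lam * C2 * s ^ (α + 1) := by
        rw [mul_assoc, ← Real.rpow_add hs]; ring_nf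
      rw [h9]; exact h7
    have h10 : s ^ (α + 1 - q) ≤ 1 :=
      Real.rpow_le_one hs.le h1s.le (by linarith)
    have hlc : 0 < lam * C2 := by positivity
    have h11 : (1:ℝ) ≤ lam * C2 := by
      calc (1:ℝ) ≤ lam * C2 * s ^ (α + 1 - q) := h8
        _ ≤ lam * C2 * 1 := mul_le_mul_of_nonneg_left h10 hlc.le
        _ = lam * C2 := by ring
    have h12 : lam * C2 ≤ lam * (C2 * M ^ (α + 1 - p)) := by
      calc lam * C2 = lam * C2 * 1 := by ring
        _ ≤ lam * C2 * M ^ (α + 1 - p) := mul_le_mul_of_nonneg_left hMe hlc.le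
        _ = lam * (C2 * M ^ (α + 1 - p)) := by ring
    linarith
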